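/- Let r ≥ 1 and s ≥ 1 be integers and let G be the graph 𝒢(0,r,s) on n = r + s + 2 vertices. Then q₁(G) + q₂(G) > d₁(G) + d₂(G) + 1, where q₁(G) ≥ q₂(G) are the two largest eigenvalues (with multiplicity) of the signless Laplacian Q(G) and d₁(G) ≥ d₂(G) are the two largest vertex degrees of G. -/

import Mathlib

open Matrix

/-- The signless Laplacian matrix `Q(G) = D + A` of a simple graph, over `ℝ`. -/
def sLapMatrix {m : ℕ} (G : SimpleGraph (Fin m)) [DecidableRel G.Adj] :
    Matrix (Fin m) (Fin m) ℝ :=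
  G.degMatrix ℝ + G.adjMatrix ℝ

/-- `q` lists the eigenvalues of `A` (with multiplicity) in non-increasing order. -/
def IsEigSeq {m : ℕ} (A : Matrix (Fin m) (Fin m) ℝ) (q : Fin m → ℝ) : Prop :=
  Antitone q ∧ ∃ (hA : A.IsHermitian) (σ : Equiv.Perm (Fin m)),
    ∀ i, q i = hA.eigenvalues (σ i)

/-- `d` lists the degrees of `G` (with multiplicity) in non-increasing order. -/
def IsDegSeq {m : ℕ} (G : SimpleGraph (Fin m)) [DecidableRel G.Adj] (d : Fin m → ℕ) : Prop :=
  Antitone d ∧ ∃ σ : Equiv.Perm (Fin m), ∀ i, d i = G.degree (σ i)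

/-- The graph `𝒢(p,r,s)` on `p + r + s + 2` vertices: the graph `ℋ(p,r,s)` plus the
edge `{u, v} = {0, 1}`. -/
def GGraph (p r s : ℕ) : SimpleGraph (Fin (p + r + s + 2)) where
  Adj a b :=
    ((a.val = 0 ∧ b.val = 1) ∨ (b.val = 0 ∧ a.val = 1)) ∨
    (((a.val = 0 ∧ 2 ≤ b.val ∧ b.val < p + r + 2) ∨
      (a.val = 1 ∧ 2 ≤ b.val ∧ (b.val < p + 2 ∨ p + r + 2 ≤ b.val))) ∨
     ((b.val = 0 ∧ 2 ≤ a.val ∧ a.val < p + r + 2) ∨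
      (b.val = 1 ∧ 2 ≤ a.val ∧ (a.val < p + 2 ∨ p + r + 2 ≤ a.val))))
  symm := by constructor; intro a b h; tauto
  loopless := by
    constructor
    intro a h
    rcases h with (⟨h1, h2⟩ | ⟨h1, h2⟩) |
      ((⟨h1, h2, _⟩ | ⟨h1, h2, _⟩) | (⟨h1, h2, _⟩ | ⟨h1, h2, _⟩)) <;> omega

instance GGraph.adjDecidable (p r s : ℕ) : DecidableRel (GGraph p r s).Adj := fun a b =>
  inferInstanceAs (Decidable
    (((a.val = 0 ∧ b.val = 1) ∨ (b.val = 0 ∧ a.val = 1)) ∨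
     (((a.val = 0 ∧ 2 ≤ b.val ∧ b.val < p + r + 2) ∨
       (a.val = 1 ∧ 2 ≤ b.val ∧ (b.val < p + 2 ∨ p + r + 2 ≤ b.val))) ∨
      ((b.val = 0 ∧ 2 ≤ a.val ∧ a.val < p + r + 2) ∨
       (b.val = 1 ∧ 2 ≤ a.val ∧ (a.val < p + 2 ∨ p + r + 2 ≤ a.val))))))


section helpers

variable {M : Type*} [NonAssocSemiring M]

lemma sum_ite_Ico {n : ℕ} (lo hi : ℕ) (hhi : hi ≤ n) (c : M) :
    ∑ b : Fin n, (if lo ≤ b.val ∧ b.val < hi then c else 0) = (hi - lo : ℕ) * c := by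
  rw [Fin.sum_univ_eq_sum_range (fun i => if lo ≤ i ∧ i < hi then c else 0) n,
    ← Finset.sum_filter]
  have h : (Finset.range n).filter (fun i => lo ≤ i ∧ i < hi) = Finset.Ico lo hi := by
    ext i
    simp only [Finset.mem_filter, Finset.mem_range, Finset.mem_Ico]
    omega
  rw [h, Finset.sum_const, Nat.card_Ico, nsmul_eq_mul]

lemma sum_ite_pt {n : ℕ} (k : ℕ) (hk : k < n) (c : M) :
    ∑ b : Fin n, (if b.val = k then c else 0) = c := by
  rw [Fin.sum_univ_eq_sum_range (fun i => if i = k then c else 0) n]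
  rw [Finset.sum_ite_eq' (Finset.range n) k (fun _ => c)]
  simp [hk]

end helpers

lemma gg_adj (p r s : ℕ) (a b : Fin (p + r + s + 2)) :
    (GGraph p r s).Adj a b ↔
    (((a.val = 0 ∧ b.val = 1) ∨ (b.val = 0 ∧ a.val = 1)) ∨
     (((a.val = 0 ∧ 2 ≤ b.val ∧ b.val < p + r + 2) ∨
       (a.val = 1 ∧ 2 ≤ b.val ∧ (b.val < p + 2 ∨ p + r + 2 ≤ b.val))) ∨
      ((b.val = 0 ∧ 2 ≤ a.val ∧ a.val < p + r + 2) ∨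
       (b.val = 1 ∧ 2 ≤ a.val ∧ (a.val < p + 2 ∨ p + r + 2 ≤ a.val))))) := Iff.rfl

lemma gg_degree {r s : ℕ} (a : Fin (0 + r + s + 2)) :
    (GGraph 0 r s).degree a
      = if a.val = 0 then r + 1 else if a.val = 1 then s + 1 else 1 := by
  rw [← SimpleGraph.card_neighborFinset_eq_degree, SimpleGraph.neighborFinset_eq_filter,
    Finset.card_filter]
  by_cases ha0 : a.val = 0
  · rw [Finset.sum_congr rfl (fun b _ => show (if (GGraph 0 r s).Adj a b then (1:ℕ) else 0)
        = (if b.val = 1 then 1 else 0) + (if 2 ≤ b.val ∧ b.val < r + 2 then 1 else 0) from by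
      simp only [gg_adj]; split_ifs <;> omega)]
    rw [Finset.sum_add_distrib, sum_ite_pt 1 (by omega) 1, sum_ite_Ico 2 (r+2) (by omega) 1]
    simp only [ha0, if_pos]
    simp only [Nat.cast_id]
    omega
  · by_cases ha1 : a.val = 1
    · rw [Finset.sum_congr rfl (fun b _ => show (if (GGraph 0 r s).Adj a b then (1:ℕ) else 0)
          = (if b.val = 0 then 1 else 0)
            + (if r + 2 ≤ b.val ∧ b.val < r + s + 2 then 1 else 0) from by
        have hb := b.isLt
        simp only [gg_adj]; split_ifs <;> omega)]
      rw [Finset.sum_add_distrib, sum_ite_pt 0 (by omega) 1,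
        sum_ite_Ico (r+2) (r+s+2) (by omega) 1]
      rw [if_neg ha0, if_pos ha1]
      simp only [Nat.cast_id]
      omega
    · by_cases ha2 : a.val < r + 2
      · rw [Finset.sum_congr rfl (fun b _ => show (if (GGraph 0 r s).Adj a b then (1:ℕ) else 0)
            = (if b.val = 0 then 1 else 0) from by
          simp only [gg_adj]; split_ifs <;> omega)]
        rw [sum_ite_pt 0 (by omega) 1, if_neg ha0, if_neg ha1]
      · rw [Finset.sum_congr rfl (fun b _ => show (if (GGraph 0 r s).Adj a b then (1:ℕ) else 0)
            = (if b.val = 1 then 1 else 0) from by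
          simp only [gg_adj]; split_ifs <;> omega)]
        rw [sum_ite_pt 1 (by omega) 1, if_neg ha0, if_neg ha1]

def xvec (r : ℕ) {n : ℕ} : Fin n → ℝ := fun a =>
  if a.val = 0 then (r:ℝ)+1 else if 2 ≤ a.val ∧ a.val < r+2 then 1 else 0

def yvec (r s : ℕ) {n : ℕ} : Fin n → ℝ := fun a =>
  if a.val = 1 then (s:ℝ)+1 else if r+2 ≤ a.val ∧ a.val < r+s+2 then 1 else 0

lemma xvec_dot {r s : ℕ} :
    (xvec r : Fin (0+r+s+2) → ℝ) ⬝ᵥ xvec r = ((r:ℝ)+1)*((r:ℝ)+1) + r := by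
  have h : (xvec r : Fin (0+r+s+2) → ℝ) ⬝ᵥ xvec r = ∑ a, xvec r a * xvec r a := rfl
  rw [h, Finset.sum_congr rfl (fun a (_ : a ∈ Finset.univ) => show xvec r a * xvec r a
      = (if a.val = 0 then ((r:ℝ)+1)*((r:ℝ)+1) else 0)
        + (if 2 ≤ a.val ∧ a.val < r+2 then 1 else 0) from by
    simp only [xvec]; split_ifs <;> first | ring1 | (exfalso; omega))]
  rw [Finset.sum_add_distrib, sum_ite_pt 0 (by omega) _, sum_ite_Ico 2 (r+2) (by omega) 1,
    show ((r+2-2 : ℕ)) = r from by omega]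
  ring

lemma yvec_dot {r s : ℕ} :
    (yvec r s : Fin (0+r+s+2) → ℝ) ⬝ᵥ yvec r s = ((s:ℝ)+1)*((s:ℝ)+1) + s := by
  have h : (yvec r s : Fin (0+r+s+2) → ℝ) ⬝ᵥ yvec r s = ∑ a, yvec r s a * yvec r s a := rfl
  rw [h, Finset.sum_congr rfl (fun a (_ : a ∈ Finset.univ) => show yvec r s a * yvec r s a
      = (if a.val = 1 then ((s:ℝ)+1)*((s:ℝ)+1) else 0)
        + (if r+2 ≤ a.val ∧ a.val < r+s+2 then 1 else 0) from by
    simp only [yvec]; split_ifs <;> first | ring1 | (exfalso; omega))]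
  rw [Finset.sum_add_distrib, sum_ite_pt 1 (by omega) _,
    sum_ite_Ico (r+2) (r+s+2) (by omega) 1,
    show ((r+s+2-(r+2) : ℕ)) = s from by omega]
  ring

lemma xy_dot {r s : ℕ} :
    (xvec r : Fin (0+r+s+2) → ℝ) ⬝ᵥ yvec r s = 0 := by
  have h : (xvec r : Fin (0+r+s+2) → ℝ) ⬝ᵥ yvec r s = ∑ a, xvec r a * yvec r s a := rfl
  rw [h]
  refine Finset.sum_eq_zero fun a _ => ?_
  simp only [xvec, yvec]
  split_ifs <;> first | ring1 | (exfalso; omega)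

lemma slap_mulVec {r s : ℕ} (v : Fin (0+r+s+2) → ℝ) (a : Fin (0+r+s+2)) :
    (sLapMatrix (GGraph 0 r s) *ᵥ v) a
      = ((GGraph 0 r s).degree a : ℝ) * v a
        + ∑ b, (if (GGraph 0 r s).Adj a b then (1:ℝ) else 0) * v b := by
  rw [sLapMatrix, Matrix.add_mulVec, Pi.add_apply, SimpleGraph.degMatrix_mulVec_apply]
  congr 1

lemma xvec_quad {r s : ℕ} :
    (xvec r : Fin (0+r+s+2) → ℝ) ⬝ᵥ (sLapMatrix (GGraph 0 r s) *ᵥ xvec r)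
      = ((r:ℝ)+1)*(((r:ℝ)+1)*((r:ℝ)+1)+(r:ℝ)) + r*((r:ℝ)+2) := by
  have hcomp : ∀ a : Fin (0+r+s+2),
      xvec r a * (sLapMatrix (GGraph 0 r s) *ᵥ xvec r) a
      = (if a.val = 0 then ((r:ℝ)+1)*(((r:ℝ)+1)*((r:ℝ)+1)+(r:ℝ)) else 0)
        + (if 2 ≤ a.val ∧ a.val < r+2 then (r:ℝ)+2 else 0) := by
    intro a
    rw [slap_mulVec, gg_degree a]
    by_cases ha0 : a.val = 0
    · rw [Finset.sum_congr rfl (fun b (_ : b ∈ Finset.univ) =>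
          show (if (GGraph 0 r s).Adj a b then (1:ℝ) else 0) * xvec r b
          = (if 2 ≤ b.val ∧ b.val < r+2 then (1:ℝ) else 0) from by
        simp only [gg_adj, xvec]; split_ifs <;> first | ring1 | (exfalso; omega))]
      rw [sum_ite_Ico 2 (r+2) (by omega) 1, show ((r+2-2 : ℕ)) = r from by omega]
      rw [if_pos ha0, if_pos ha0, if_neg (by omega)]
      simp only [xvec, if_pos ha0]
      push_cast
      ring
    · by_cases ha1 : a.val = 1
      · have hxa : xvec r a = 0 := by
          simp only [xvec]; rw [if_neg ha0, if_neg (by omega)]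
        rw [hxa, zero_mul, if_neg ha0, if_neg (by omega)]
        norm_num
      · by_cases ha2 : a.val < r + 2
        · rw [Finset.sum_congr rfl (fun b (_ : b ∈ Finset.univ) =>
              show (if (GGraph 0 r s).Adj a b then (1:ℝ) else 0) * xvec r b
              = (if b.val = 0 then (r:ℝ)+1 else 0) from by
            simp only [gg_adj, xvec]; split_ifs <;> first | ring1 | (exfalso; omega))]
          rw [sum_ite_pt 0 (by omega) _]
          rw [if_neg ha0, if_neg ha1, if_neg ha0, if_pos ⟨by omega, ha2⟩]
          simp only [xvec, if_neg ha0, if_pos (show 2 ≤ a.val ∧ a.val < r+2 from ⟨by omega, ha2⟩)]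
          push_cast
          ring
        · have hxa : xvec r a = 0 := by
            simp only [xvec]; rw [if_neg ha0, if_neg (by omega)]
          rw [hxa, zero_mul, if_neg ha0, if_neg (by omega)]
          norm_num
  have h : (xvec r : Fin (0+r+s+2) → ℝ) ⬝ᵥ (sLapMatrix (GGraph 0 r s) *ᵥ xvec r)
      = ∑ a, xvec r a * (sLapMatrix (GGraph 0 r s) *ᵥ xvec r) a := rfl
  rw [h, Finset.sum_congr rfl (fun a _ => hcomp a), Finset.sum_add_distrib,
    sum_ite_pt 0 (by omega) _, sum_ite_Ico 2 (r+2) (by omega) _,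
    show ((r+2-2 : ℕ)) = r from by omega]

lemma yvec_quad {r s : ℕ} :
    (yvec r s : Fin (0+r+s+2) → ℝ) ⬝ᵥ (sLapMatrix (GGraph 0 r s) *ᵥ yvec r s)
      = ((s:ℝ)+1)*(((s:ℝ)+1)*((s:ℝ)+1)+(s:ℝ)) + s*((s:ℝ)+2) := by
  have hcomp : ∀ a : Fin (0+r+s+2),
      yvec r s a * (sLapMatrix (GGraph 0 r s) *ᵥ yvec r s) a
      = (if a.val = 1 then ((s:ℝ)+1)*(((s:ℝ)+1)*((s:ℝ)+1)+(s:ℝ)) else 0)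
        + (if r+2 ≤ a.val ∧ a.val < r+s+2 then (s:ℝ)+2 else 0) := by
    intro a
    have hlt := a.isLt
    rw [slap_mulVec, gg_degree a]
    by_cases ha1 : a.val = 1
    · rw [Finset.sum_congr rfl (fun b (_ : b ∈ Finset.univ) =>
          show (if (GGraph 0 r s).Adj a b then (1:ℝ) else 0) * yvec r s b
          = (if r+2 ≤ b.val ∧ b.val < r+s+2 then (1:ℝ) else 0) from by
        have hb := b.isLt
        simp only [gg_adj, yvec]; split_ifs <;> first | ring1 | (exfalso; omega))]
      rw [sum_ite_Ico (r+2) (r+s+2) (by omega) 1, show ((r+s+2-(r+2) : ℕ)) = s from by omega]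
      rw [if_neg (by omega), if_pos ha1, if_pos ha1, if_neg (by omega)]
      simp only [yvec, if_pos ha1]
      push_cast
      ring
    · by_cases ha0 : a.val = 0
      · have hya : yvec r s a = 0 := by
          simp only [yvec]; rw [if_neg ha1, if_neg (by omega)]
        rw [hya, zero_mul, if_neg ha1, if_neg (by omega)]
        norm_num
      · by_cases ha2 : r + 2 ≤ a.val
        · rw [Finset.sum_congr rfl (fun b (_ : b ∈ Finset.univ) =>
              show (if (GGraph 0 r s).Adj a b then (1:ℝ) else 0) * yvec r s b
              = (if b.val = 1 then (s:ℝ)+1 else 0) from by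
            simp only [gg_adj, yvec]; split_ifs <;> first | ring1 | (exfalso; omega))]
          rw [sum_ite_pt 1 (by omega) _]
          rw [if_neg ha0, if_neg ha1, if_neg ha1, if_pos ⟨ha2, by omega⟩]
          simp only [yvec, if_neg ha1,
            if_pos (show r+2 ≤ a.val ∧ a.val < r+s+2 from ⟨ha2, by omega⟩)]
          push_cast
          ring
        · have hya : yvec r s a = 0 := by
            simp only [yvec]; rw [if_neg ha1, if_neg (by omega)]
          rw [hya, zero_mul, if_neg ha1, if_neg (by omega)]
          norm_num
  have h : (yvec r s : Fin (0+r+s+2) → ℝ) ⬝ᵥ (sLapMatrix (GGraph 0 r s) *ᵥ yvec r s)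
      = ∑ a, yvec r s a * (sLapMatrix (GGraph 0 r s) *ᵥ yvec r s) a := rfl
  rw [h, Finset.sum_congr rfl (fun a _ => hcomp a), Finset.sum_add_distrib,
    sum_ite_pt 1 (by omega) _, sum_ite_Ico (r+2) (r+s+2) (by omega) _,
    show ((r+s+2-(r+2) : ℕ)) = s from by omega]

lemma kyfan2 {n : ℕ} (A : Matrix (Fin n) (Fin n) ℝ) (q : Fin n → ℝ)
    (hq : IsEigSeq A q) (i0 i1 : Fin n) (h0 : i0.val = 0) (h1 : i1.val = 1)
    (x y : Fin n → ℝ)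
    (hx : x ⬝ᵥ x = 1) (hy : y ⬝ᵥ y = 1) (hxy : x ⬝ᵥ y = 0) :
    x ⬝ᵥ (A *ᵥ x) + y ⬝ᵥ (A *ᵥ y) ≤ q i0 + q i1 := by
  obtain ⟨hmono, hA, σ, hqe⟩ := hq
  have h2 : ∀ i j, A i j = A j i := by
    intro i j
    conv_lhs => rw [← hA]
    simp [Matrix.conjTranspose_apply]
  have hsymm : ∀ u w : Fin n → ℝ, u ⬝ᵥ (A *ᵥ w) = (A *ᵥ u) ⬝ᵥ w := by
    intro u w
    simp only [dotProduct, Matrix.mulVec, dotProduct, Finset.mul_sum, Finset.sum_mul]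
    rw [Finset.sum_comm]
    exact Finset.sum_congr rfl fun j _ => Finset.sum_congr rfl fun i _ => by
      rw [h2 i j]; ring
  set e := hA.eigenvectorBasis with he
  have hip : ∀ u v : EuclideanSpace ℝ (Fin n), (inner ℝ u v : ℝ) = u ⬝ᵥ v := by
    intro u v
    simp [PiLp.inner_apply, RCLike.inner_apply, dotProduct, mul_comm]
  let x' : EuclideanSpace ℝ (Fin n) := WithLp.toLp 2 x
  let y' : EuclideanSpace ℝ (Fin n) := WithLp.toLp 2 y
  set c : Fin n → ℝ := fun i => e.repr x' i with hcdef
  set b : Fin n → ℝ := fun i => e.repr y' i with hbdef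
  have hrepr : ∀ u v : EuclideanSpace ℝ (Fin n),
      (u : Fin n → ℝ) ⬝ᵥ (v : Fin n → ℝ) = ∑ i, e.repr u i * e.repr v i := by
    intro u v
    rw [← hip u v, ← e.repr.inner_map_map u v, hip]
    rfl
  have hcc : ∑ i, c i * c i = 1 := by rw [hcdef]; rw [← hrepr x' x']; exact hx
  have hbb : ∑ i, b i * b i = 1 := by rw [hbdef]; rw [← hrepr y' y']; exact hy
  have heix : ∀ i, (e i : Fin n → ℝ) ⬝ᵥ x = c i := by
    intro i
    show _ = e.repr x' i
    rw [OrthonormalBasis.repr_apply_apply, hip]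
  have heiy : ∀ i, (e i : Fin n → ℝ) ⬝ᵥ y = b i := by
    intro i
    show _ = e.repr y' i
    rw [OrthonormalBasis.repr_apply_apply, hip]
  have heie : ∀ i, (e i : Fin n → ℝ) ⬝ᵥ (e i : Fin n → ℝ) = 1 := by
    intro i
    rw [← hip (e i) (e i), real_inner_self_eq_norm_mul_norm, e.orthonormal.1 i]
    norm_num
  have hAx : ∀ i, e.repr (WithLp.toLp 2 (A *ᵥ x) : EuclideanSpace ℝ (Fin n)) i = hA.eigenvalues i * c i := by
    intro i
    rw [OrthonormalBasis.repr_apply_apply, hip, WithLp.ofLp_toLp, hsymm]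
    have h : (A *ᵥ (e i) : Fin n → ℝ) = hA.eigenvalues i • (e i : Fin n → ℝ) :=
      hA.mulVec_eigenvectorBasis i
    rw [h, smul_dotProduct, heix i, smul_eq_mul]
  have hAy : ∀ i, e.repr (WithLp.toLp 2 (A *ᵥ y) : EuclideanSpace ℝ (Fin n)) i = hA.eigenvalues i * b i := by
    intro i
    rw [OrthonormalBasis.repr_apply_apply, hip, WithLp.ofLp_toLp, hsymm]
    have h : (A *ᵥ (e i) : Fin n → ℝ) = hA.eigenvalues i • (e i : Fin n → ℝ) :=
      hA.mulVec_eigenvectorBasis i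
    rw [h, smul_dotProduct, heiy i, smul_eq_mul]
  have hxAx : x ⬝ᵥ (A *ᵥ x) = ∑ i, hA.eigenvalues i * (c i * c i) := by
    rw [hrepr x' (WithLp.toLp 2 (A *ᵥ x) : EuclideanSpace ℝ (Fin n))]
    exact Finset.sum_congr rfl fun i _ => by rw [hAx i]; show c i * _ = _; ring
  have hyAy : y ⬝ᵥ (A *ᵥ y) = ∑ i, hA.eigenvalues i * (b i * b i) := by
    rw [hrepr y' (WithLp.toLp 2 (A *ᵥ y) : EuclideanSpace ℝ (Fin n))]
    exact Finset.sum_congr rfl fun i _ => by rw [hAy i]; show b i * _ = _; ring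
  -- Bessel-type bound
  have ht1 : ∀ i, c i * c i + b i * b i ≤ 1 := by
    intro i
    set w : Fin n → ℝ := c i • x + b i • y with hwdef
    have hew : (e i : Fin n → ℝ) ⬝ᵥ w = c i * c i + b i * b i := by
      rw [hwdef]
      simp only [dotProduct_add, dotProduct_smul, heix, heiy, smul_eq_mul]
    have hww : w ⬝ᵥ w = c i * c i + b i * b i := by
      rw [hwdef]
      simp only [dotProduct_add, add_dotProduct, dotProduct_smul, smul_dotProduct,
        smul_eq_mul, hx, hy, hxy, dotProduct_comm y x]
      ring
    have hcs := Finset.sum_mul_sq_le_sq_mul_sq Finset.univ (e i : Fin n → ℝ) w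
    have h1 : (∑ j, (e i : Fin n → ℝ) j * w j) = c i * c i + b i * b i := hew
    have h2' : (∑ j, ((e i : Fin n → ℝ) j) ^ 2) = 1 := by
      simp only [pow_two]; exact heie i
    have h3' : (∑ j, (w j) ^ 2) = c i * c i + b i * b i := by
      simp only [pow_two]; exact hww
    rw [h1, h2', h3', one_mul] at hcs
    nlinarith [mul_self_nonneg (c i), mul_self_nonneg (b i)]
  -- combine
  have hLHS : x ⬝ᵥ (A *ᵥ x) + y ⬝ᵥ (A *ᵥ y)
      = ∑ i, hA.eigenvalues i * (c i * c i + b i * b i) := by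
    rw [hxAx, hyAy, ← Finset.sum_add_distrib]
    exact Finset.sum_congr rfl fun i _ => by ring
  set u : Fin n → ℝ := fun i => c (σ i) * c (σ i) + b (σ i) * b (σ i) with hudef
  have hσ : ∑ i, hA.eigenvalues i * (c i * c i + b i * b i) = ∑ i, q i * u i := by
    rw [← Equiv.sum_comp σ (fun i => hA.eigenvalues i * (c i * c i + b i * b i))]
    exact Finset.sum_congr rfl fun i _ => by rw [hqe i]
  have hu0 : ∀ i, 0 ≤ u i := fun i => add_nonneg (mul_self_nonneg _) (mul_self_nonneg _)
  have hu1 : ∀ i, u i ≤ 1 := fun i => ht1 (σ i)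
  have husum : ∑ i, u i = 2 := by
    rw [hudef, Equiv.sum_comp σ (fun i => c i * c i + b i * b i), Finset.sum_add_distrib,
      hcc, hbb]
    norm_num
  have herase : ∑ i ∈ Finset.univ.erase i0, u i = 2 - u i0 := by
    have := Finset.add_sum_erase Finset.univ u (Finset.mem_univ i0)
    linarith [husum ▸ this]
  have hsplit : ∑ i, q i * u i
      = q i0 * u i0 + ∑ i ∈ Finset.univ.erase i0, q i * u i :=
    (Finset.add_sum_erase Finset.univ (fun i => q i * u i) (Finset.mem_univ i0)).symm
  have hbound : ∑ i ∈ Finset.univ.erase i0, q i * u i ≤ q i1 * (2 - u i0) := by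
    rw [← herase, Finset.mul_sum]
    refine Finset.sum_le_sum fun i hi => ?_
    have hne : i ≠ i0 := (Finset.mem_erase.1 hi).1
    have hle : i1 ≤ i := by
      rw [Fin.le_def, h1]
      have : i.val ≠ i0.val := fun h => hne (Fin.ext h)
      omega
    exact mul_le_mul_of_nonneg_right (hmono hle) (hu0 i)
  have hq10 : q i1 ≤ q i0 := by
    refine hmono ?_
    rw [Fin.le_def, h0, h1]
    omega
  rw [hLHS, hσ, hsplit]
  nlinarith [hu1 i0, hu0 i0]

set_option maxHeartbeats 1000000 in
theorem GGraph_p_zero_sum_two_largest_gt {r s : ℕ} (hr : 1 ≤ r) (hs : 1 ≤ s)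
    (q : Fin (0 + r + s + 2) → ℝ) (hq : IsEigSeq (sLapMatrix (GGraph 0 r s)) q)
    (d : Fin (0 + r + s + 2) → ℕ) (hd : IsDegSeq (GGraph 0 r s) d) :
    q ⟨0, by omega⟩ + q ⟨1, by omega⟩ >
      (d ⟨0, by omega⟩ : ℝ) + (d ⟨1, by omega⟩ : ℝ) + 1 := by
  have hR : (1:ℝ) ≤ (r:ℝ) := by exact_mod_cast hr
  have hS : (1:ℝ) ≤ (s:ℝ) := by exact_mod_cast hs
  have hNx : (0:ℝ) < ((r:ℝ)+1)*((r:ℝ)+1) + r := by nlinarith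
  have hNy : (0:ℝ) < ((s:ℝ)+1)*((s:ℝ)+1) + s := by nlinarith
  set cx := (Real.sqrt (((r:ℝ)+1)*((r:ℝ)+1) + r))⁻¹ with hcx
  set cy := (Real.sqrt (((s:ℝ)+1)*((s:ℝ)+1) + s))⁻¹ with hcy
  have hcx2 : cx * cx = (((r:ℝ)+1)*((r:ℝ)+1) + r)⁻¹ := by
    rw [hcx, ← mul_inv, Real.mul_self_sqrt hNx.le]
  have hcy2 : cy * cy = (((s:ℝ)+1)*((s:ℝ)+1) + s)⁻¹ := by
    rw [hcy, ← mul_inv, Real.mul_self_sqrt hNy.le]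
  set X : Fin (0+r+s+2) → ℝ := cx • xvec r with hX
  set Y : Fin (0+r+s+2) → ℝ := cy • yvec r s with hY
  have hXX : X ⬝ᵥ X = 1 := by
    rw [hX, smul_dotProduct, dotProduct_smul, xvec_dot, smul_eq_mul, smul_eq_mul,
      ← mul_assoc, hcx2]
    exact inv_mul_cancel₀ hNx.ne'
  have hYY : Y ⬝ᵥ Y = 1 := by
    rw [hY, smul_dotProduct, dotProduct_smul, yvec_dot, smul_eq_mul, smul_eq_mul,
      ← mul_assoc, hcy2]
    exact inv_mul_cancel₀ hNy.ne'
  have hXY : X ⬝ᵥ Y = 0 := by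
    rw [hX, hY, smul_dotProduct, dotProduct_smul, xy_dot, smul_eq_mul, smul_eq_mul]
    ring
  have hky := kyfan2 (sLapMatrix (GGraph 0 r s)) q hq ⟨0, by omega⟩ ⟨1, by omega⟩ rfl rfl
    X Y hXX hYY hXY
  have hXQX : X ⬝ᵥ (sLapMatrix (GGraph 0 r s) *ᵥ X)
      = (((r:ℝ)+1)*((r:ℝ)+1)+r)⁻¹
        * (((r:ℝ)+1)*(((r:ℝ)+1)*((r:ℝ)+1)+(r:ℝ)) + r*((r:ℝ)+2)) := by
    rw [hX, Matrix.mulVec_smul, smul_dotProduct, dotProduct_smul, xvec_quad,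
      smul_eq_mul, smul_eq_mul, ← mul_assoc, hcx2]
  have hYQY : Y ⬝ᵥ (sLapMatrix (GGraph 0 r s) *ᵥ Y)
      = (((s:ℝ)+1)*((s:ℝ)+1)+s)⁻¹
        * (((s:ℝ)+1)*(((s:ℝ)+1)*((s:ℝ)+1)+(s:ℝ)) + s*((s:ℝ)+2)) := by
    rw [hY, Matrix.mulVec_smul, smul_dotProduct, dotProduct_smul, yvec_quad,
      smul_eq_mul, smul_eq_mul, ← mul_assoc, hcy2]
  rw [hXQX, hYQY] at hky
  -- degree bound
  obtain ⟨hdmono, τ, hdτ⟩ := hd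
  have hdsum : d ⟨0, by omega⟩ + d ⟨1, by omega⟩ ≤ r + s + 2 := by
    rw [hdτ, hdτ, gg_degree, gg_degree]
    have hne : (τ ⟨0, by omega⟩).val ≠ (τ ⟨1, by omega⟩).val := by
      intro h
      have h2 := τ.injective (Fin.ext h)
      have h3 : (0:ℕ) = 1 := congrArg Fin.val h2
      omega
    split_ifs <;> omega
  have hdreal : (d ⟨0, by omega⟩ : ℝ) + (d ⟨1, by omega⟩ : ℝ) + 1 ≤ (r:ℝ) + s + 3 := by
    have h := (Nat.cast_le (α := ℝ)).2 hdsum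
    push_cast at h
    linarith
  -- arithmetic
  have e1 : (((r:ℝ)+1)*((r:ℝ)+1)+r)⁻¹
      * (((r:ℝ)+1)*(((r:ℝ)+1)*((r:ℝ)+1)+(r:ℝ)) + r*((r:ℝ)+2))
      = ((r:ℝ)+2) - ((r:ℝ)+1) * (((r:ℝ)+1)*((r:ℝ)+1)+r)⁻¹ := by
    field_simp
    ring
  have e2 : (((s:ℝ)+1)*((s:ℝ)+1)+s)⁻¹
      * (((s:ℝ)+1)*(((s:ℝ)+1)*((s:ℝ)+1)+(s:ℝ)) + s*((s:ℝ)+2))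
      = ((s:ℝ)+2) - ((s:ℝ)+1) * (((s:ℝ)+1)*((s:ℝ)+1)+s)⁻¹ := by
    field_simp
    ring
  have b1 : ((r:ℝ)+1) * (((r:ℝ)+1)*((r:ℝ)+1)+r)⁻¹ ≤ 2/5 := by
    rw [← div_eq_mul_inv, div_le_iff₀ hNx]
    nlinarith
  have b2 : ((s:ℝ)+1) * (((s:ℝ)+1)*((s:ℝ)+1)+s)⁻¹ ≤ 2/5 := by
    rw [← div_eq_mul_inv, div_le_iff₀ hNy]
    nlinarith
  rw [e1, e2] at hky
  linarith
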